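/- Let X be a commutative ring with unity, and let A, B, C, D ∈ X with A - B and C - D units. Then the map F : X → X defined by F(Z) = C - (A - Z)(C - D)(A - B)^{-1} is a graph automorphism of the unitary Cayley graph G_X with F(A) = C and F(B) = D. In particular G_X is a symmetric graph. -/

import Mathlib

/-- The unitary Cayley graph of a commutative ring: `a` is adjacent to `b`
iff `a ≠ b` and `a - b` is a unit. -/
def unitaryCayley (X : Type*) [CommRing X] : SimpleGraph X where
  Adj a b := a ≠ b ∧ IsUnit (a - b)
  symm := by
    constructor
    rintro a b ⟨h1, h2⟩
    exact ⟨h1.symm, neg_sub a b ▸ h2.neg⟩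
  loopless := by constructor; rintro a ⟨h, _⟩; exact h rfl

theorem unitaryCayley_symmetric {X : Type*} [CommRing X] (A B C D : X)
    (hAB : IsUnit (A - B)) (hCD : IsUnit (C - D)) :
    Function.Bijective (fun Z => C - (A - Z) * (C - D) * Ring.inverse (A - B)) ∧
      C - (A - A) * (C - D) * Ring.inverse (A - B) = C ∧
      C - (A - B) * (C - D) * Ring.inverse (A - B) = D ∧
      ∀ Y Z : X, (unitaryCayley X).Adj Y Z ↔
        (unitaryCayley X).Adj (C - (A - Y) * (C - D) * Ring.inverse (A - B))
          (C - (A - Z) * (C - D) * Ring.inverse (A - B)) := by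
  set u : X := (C - D) * Ring.inverse (A - B) with hu_def
  have hu : IsUnit u := hCD.mul (isUnit_ringInverse.mpr hAB)
  have hdiff : ∀ Y Z : X,
      (C - (A - Y) * (C - D) * Ring.inverse (A - B)) -
        (C - (A - Z) * (C - D) * Ring.inverse (A - B)) = (Y - Z) * u := by
    intro Y Z; rw [hu_def]; ring
  have hinj : Function.Injective
      (fun Z => C - (A - Z) * (C - D) * Ring.inverse (A - B)) := by
    intro Y Z h
    have h2 : (Y - Z) * u = 0 := by rw [← hdiff Y Z]; simp only at h; rw [h]; ring
    have h3 : Y - Z = 0 := by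
      have := congrArg (· * Ring.inverse u) h2
      simpa [mul_assoc, Ring.mul_inverse_cancel u hu] using this
    exact sub_eq_zero.mp h3
  refine ⟨⟨hinj, ?_⟩, by simp, ?_, ?_⟩
  · intro W
    refine ⟨A - (C - W) * (A - B) * Ring.inverse (C - D), ?_⟩
    simp only
    have h1 : (A - (A - (C - W) * (A - B) * Ring.inverse (C - D))) * (C - D) *
        Ring.inverse (A - B)
        = (C - W) * ((A - B) * Ring.inverse (A - B)) *
          (Ring.inverse (C - D) * (C - D)) := by ring
    rw [h1, Ring.mul_inverse_cancel _ hAB, Ring.inverse_mul_cancel _ hCD]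
    ring
  · rw [mul_assoc, mul_comm (C - D), ← mul_assoc, Ring.mul_inverse_cancel _ hAB]
    ring
  · intro Y Z
    simp only [unitaryCayley, ne_eq, hdiff Y Z]
    constructor
    · rintro ⟨h1, h2⟩
      exact ⟨fun h => h1 (hinj h), h2.mul hu⟩
    · rintro ⟨h1, h2⟩
      refine ⟨fun h => h1 (by rw [h]), ?_⟩
      have := h2.mul (isUnit_ringInverse.mpr hu)
      rwa [mul_assoc, Ring.mul_inverse_cancel u hu, mul_one] at this
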